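/- Let Ω be a bounded open convex domain with Hilbert metric d_Ω, and let σ: R → Ω be a bi-infinite projective line in Ω. For x ∈ Ω, let P_σ(x) = { y ∈ σ : d_Ω(x,y) = d_Ω(x,σ) } be the set of closest points on σ to x. Then P_σ(x) is either a single point or a closed subsegment [σ(T₋), σ(T₊)] for some finite T₋ < T₊; in particular, P_σ(x) is convex. -/

import Mathlib

open Set Filter Classical

abbrev Ed (d : ℕ) := EuclideanSpace ℝ (Fin d)

/-- A properly convex domain in an affine chart: a bounded open convex nonempty set. -/
def IsProperlyConvex {d : ℕ} (Ω : Set (Ed d)) : Prop :=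
  IsOpen Ω ∧ Convex ℝ Ω ∧ Bornology.IsBounded Ω ∧ Ω.Nonempty

/-- The face of `x`: `x` together with all points `q` such that some segment inside the
closure of `Ω` contains both `x` and `q` in its interior. -/
def face {d : ℕ} (Ω : Set (Ed d)) (x : Ed d) : Set (Ed d) :=
  insert x {q | ∃ u v : Ed d, segment ℝ u v ⊆ closure Ω ∧
    x ∈ openSegment ℝ u v ∧ q ∈ openSegment ℝ u v}

/-- The Hilbert metric on a bounded open convex set, defined via the cross-ratio of
`x`, `y` and the two intersection points of the line through `x, y` with the boundary. -/
noncomputable def hilbertDist {d : ℕ} (Ω : Set (Ed d)) (x y : Ed d) : ℝ :=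
  if x = y then 0 else
    let a := x + (sSup {t : ℝ | x + t • (x - y) ∈ Ω}) • (x - y)
    let b := y + (sSup {t : ℝ | y + t • (y - x) ∈ Ω}) • (y - x)
    Real.log ((‖b - x‖ * ‖y - a‖) / (‖b - y‖ * ‖x - a‖))

namespace HilbertAux

variable {d : ℕ} {Ω : Set (Ed d)}

/-- exit time of the ray from p in direction v -/
noncomputable def exitT (Ω : Set (Ed d)) (p v : Ed d) : ℝ := sSup {t : ℝ | p + t • v ∈ Ω}

lemma exit_bddAbove (hbdd : Bornology.IsBounded Ω) {p v : Ed d} (hv : v ≠ 0) :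
    BddAbove {t : ℝ | p + t • v ∈ Ω} := by
  obtain ⟨R, hR⟩ := hbdd.exists_norm_le
  refine ⟨(R + ‖p‖) / ‖v‖, fun t ht => ?_⟩
  have h1 : ‖p + t • v‖ ≤ R := hR _ ht
  have h2 : ‖t • v‖ ≤ ‖p + t • v‖ + ‖p‖ := by
    have h2' := norm_sub_le (p + t • v) p
    have heq : (p + t • v) - p = t • v := by module
    rwa [heq] at h2'
  have h3 : |t| * ‖v‖ ≤ R + ‖p‖ := by
    rw [norm_smul, Real.norm_eq_abs] at h2; linarith
  have hv' : 0 < ‖v‖ := norm_pos_iff.mpr hv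
  calc t ≤ |t| := le_abs_self t
    _ ≤ (R + ‖p‖) / ‖v‖ := by rw [le_div_iff₀ hv']; exact h3

lemma exit_nonempty {p : Ed d} (hp : p ∈ Ω) (v : Ed d) :
    (0:ℝ) ∈ {t : ℝ | p + t • v ∈ Ω} := by simp [hp]

lemma exitT_pos (hopen : IsOpen Ω) (hbdd : Bornology.IsBounded Ω)
    {p v : Ed d} (hp : p ∈ Ω) (hv : v ≠ 0) : 0 < exitT Ω p v := by
  obtain ⟨ε, hε, hball⟩ := Metric.isOpen_iff.mp hopen p hp
  have hv' : 0 < ‖v‖ := norm_pos_iff.mpr hv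
  set t₀ : ℝ := ε / (2 * ‖v‖) with ht₀
  have ht₀pos : 0 < t₀ := by positivity
  have hmem : p + t₀ • v ∈ Ω := by
    apply hball
    rw [Metric.mem_ball, dist_eq_norm]
    have : ‖p + t₀ • v - p‖ = t₀ * ‖v‖ := by
      simp [norm_smul, abs_of_pos ht₀pos]
    rw [this]
    have : t₀ * ‖v‖ = ε / 2 := by
      rw [ht₀]; field_simp
    rw [this]; linarith
  calc (0:ℝ) < t₀ := ht₀pos
    _ ≤ exitT Ω p v := le_csSup (exit_bddAbove hbdd hv) hmem

lemma exit_mem_Omega_of_lt (hconv : Convex ℝ Ω) {p v : Ed d} (hp : p ∈ Ω)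
    {t : ℝ} (h0 : 0 ≤ t) (hlt : t < exitT Ω p v) : p + t • v ∈ Ω := by
  have hne : {s : ℝ | p + s • v ∈ Ω}.Nonempty := ⟨0, exit_nonempty hp v⟩
  obtain ⟨t', ht'mem, htt'⟩ := exists_lt_of_lt_csSup hne hlt
  have ht'pos : 0 < t' := lt_of_le_of_lt h0 htt'
  have ht'ne : t' ≠ 0 := ne_of_gt ht'pos
  have hcomb : p + t • v = (1 - t / t') • p + (t / t') • (p + t' • v) := by
    rw [smul_add, smul_smul, div_mul_cancel₀ _ ht'ne]
    module
  have hr1 : t / t' ≤ 1 := by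
    rw [div_le_one ht'pos]; linarith
  rw [hcomb]
  exact hconv hp ht'mem (by linarith) (by positivity) (by ring)

lemma exit_mem_closure (hbdd : Bornology.IsBounded Ω) {p v : Ed d}
    (hp : p ∈ Ω) (hv : v ≠ 0) : p + exitT Ω p v • v ∈ closure Ω := by
  have hne : {s : ℝ | p + s • v ∈ Ω}.Nonempty := ⟨0, exit_nonempty hp v⟩
  rw [Metric.mem_closure_iff]
  intro ε hε
  have hv' : 0 < ‖v‖ := norm_pos_iff.mpr hv
  set δ := ε / (2 * ‖v‖) with hδ
  have hδpos : 0 < δ := by positivity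
  obtain ⟨t', ht'mem, htt'⟩ := exists_lt_of_lt_csSup hne
    (show exitT Ω p v - δ < exitT Ω p v by linarith)
  refine ⟨p + t' • v, ht'mem, ?_⟩
  have hle : t' ≤ exitT Ω p v := le_csSup (exit_bddAbove hbdd hv) ht'mem
  rw [dist_eq_norm]
  have : p + exitT Ω p v • v - (p + t' • v) = (exitT Ω p v - t') • v := by module
  rw [this, norm_smul, Real.norm_eq_abs, abs_of_nonneg (by linarith)]
  have h1 : exitT Ω p v - t' < δ := by linarith
  calc (exitT Ω p v - t') * ‖v‖ ≤ δ * ‖v‖ := by nlinarith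
    _ = ε / 2 * (‖v‖ / ‖v‖) := by rw [hδ]; ring
    _ = ε / 2 := by rw [div_self (ne_of_gt hv')]; ring
    _ < ε := by linarith

lemma exit_max (hopen : IsOpen Ω) (hconv : Convex ℝ Ω) (hbdd : Bornology.IsBounded Ω)
    {p v : Ed d} (hp : p ∈ Ω) (hv : v ≠ 0) {t : ℝ} (h0 : 0 ≤ t)
    (hcl : p + t • v ∈ closure Ω) : t ≤ exitT Ω p v := by
  by_contra h
  push_neg at h
  have hexit0 : 0 ≤ exitT Ω p v :=
    le_csSup (exit_bddAbove hbdd hv) (exit_nonempty hp v)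
  have ht : 0 < t := lt_of_le_of_lt hexit0 h
  obtain ⟨t', ht1, ht2⟩ := exists_between h
  have ht'pos : 0 < t' := lt_of_le_of_lt hexit0 ht1
  have hmem : p + t' • v ∈ openSegment ℝ p (p + t • v) := by
    have hlt1 : t' / t < 1 := (div_lt_one ht).mpr ht2
    refine ⟨1 - t' / t, t' / t, by linarith, by positivity, by ring, ?_⟩
    rw [smul_add, smul_smul, div_mul_cancel₀ _ (ne_of_gt ht)]
    module
  have hΩ' : p + t' • v ∈ Ω := by
    have hpint : p ∈ interior Ω := by rwa [hopen.interior_eq]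
    have := Convex.openSegment_interior_closure_subset_interior hconv hpint hcl hmem
    rwa [hopen.interior_eq] at this
  have : t' ≤ exitT Ω p v := le_csSup (exit_bddAbove hbdd hv) hΩ'
  linarith

lemma hilbertDist_formula (hopen : IsOpen Ω) (hbdd : Bornology.IsBounded Ω)
    {x y : Ed d} (hx : x ∈ Ω) (hy : y ∈ Ω) (hne : x ≠ y) :
    hilbertDist Ω x y =
      Real.log ((1 + exitT Ω y (y - x)) * (1 + exitT Ω x (x - y)) /
        (exitT Ω y (y - x) * exitT Ω x (x - y))) := by
  have hv : y - x ≠ 0 := sub_ne_zero.mpr (Ne.symm hne)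
  have hv' : x - y ≠ 0 := sub_ne_zero.mpr hne
  have hvn : 0 < ‖y - x‖ := norm_pos_iff.mpr hv
  set Tb := exitT Ω y (y - x) with hTb
  set Ta := exitT Ω x (x - y) with hTa
  have hTbpos : 0 < Tb := exitT_pos hopen hbdd hy hv
  have hTapos : 0 < Ta := exitT_pos hopen hbdd hx hv'
  have key : hilbertDist Ω x y =
      Real.log ((‖(y + Tb • (y - x)) - x‖ * ‖y - (x + Ta • (x - y))‖) /
        (‖(y + Tb • (y - x)) - y‖ * ‖x - (x + Ta • (x - y))‖)) := by
    rw [hilbertDist, if_neg hne]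
    rfl
  rw [key]
  have h1 : y + Tb • (y - x) - x = (1 + Tb) • (y - x) := by module
  have h2 : y + Tb • (y - x) - y = Tb • (y - x) := by module
  have h3 : y - (x + Ta • (x - y)) = (1 + Ta) • (y - x) := by module
  have h4 : x - (x + Ta • (x - y)) = Ta • (y - x) := by module
  rw [h1, h2, h3, h4, norm_smul, norm_smul, norm_smul, norm_smul]
  rw [Real.norm_eq_abs, Real.norm_eq_abs, Real.norm_eq_abs, Real.norm_eq_abs]
  rw [abs_of_pos (by linarith : (0:ℝ) < 1 + Tb), abs_of_pos hTbpos,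
    abs_of_pos (by linarith : (0:ℝ) < 1 + Ta), abs_of_pos hTapos]
  congr 1
  field_simp

lemma hilbertDist_self (x : Ed d) : hilbertDist Ω x x = 0 := by
  rw [hilbertDist, if_pos rfl]

lemma hilbertDist_pos_arg (hopen : IsOpen Ω) (hbdd : Bornology.IsBounded Ω)
    {x y : Ed d} (hx : x ∈ Ω) (hy : y ∈ Ω) (hne : x ≠ y) :
    1 < (1 + exitT Ω y (y - x)) * (1 + exitT Ω x (x - y)) /
        (exitT Ω y (y - x) * exitT Ω x (x - y)) := by
  have hTbpos : 0 < exitT Ω y (y - x) :=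
    exitT_pos hopen hbdd hy (sub_ne_zero.mpr (Ne.symm hne))
  have hTapos : 0 < exitT Ω x (x - y) :=
    exitT_pos hopen hbdd hx (sub_ne_zero.mpr hne)
  rw [lt_div_iff₀ (by positivity)]
  nlinarith

lemma hilbertDist_nonneg (hopen : IsOpen Ω) (hbdd : Bornology.IsBounded Ω)
    {x y : Ed d} (hx : x ∈ Ω) (hy : y ∈ Ω) : 0 ≤ hilbertDist Ω x y := by
  rcases eq_or_ne x y with rfl | hne
  · rw [hilbertDist_self]
  · rw [hilbertDist_formula hopen hbdd hx hy hne]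
    exact Real.log_nonneg (le_of_lt (hilbertDist_pos_arg hopen hbdd hx hy hne))

lemma hilbertDist_symm (hopen : IsOpen Ω) (hbdd : Bornology.IsBounded Ω)
    {x y : Ed d} (hx : x ∈ Ω) (hy : y ∈ Ω) :
    hilbertDist Ω x y = hilbertDist Ω y x := by
  rcases eq_or_ne x y with rfl | hne
  · rfl
  · rw [hilbertDist_formula hopen hbdd hx hy hne,
      hilbertDist_formula hopen hbdd hy hx (Ne.symm hne)]
    congr 1
    ring

/-- Representation of `y` relative to `x`: forward and backward gauge data. -/
lemma rep (hopen : IsOpen Ω) (hbdd : Bornology.IsBounded Ω)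
    {x y : Ed d} (hx : x ∈ Ω) (hy : y ∈ Ω) :
    ∃ (s u : ℝ) (k k' : Ed d), k ∈ closure Ω ∧ k' ∈ closure Ω ∧
      0 ≤ s ∧ s < 1 ∧ 0 ≤ u ∧
      y - x = s • (k - x) ∧ y - x = u • (x - k') ∧
      1 + u = Real.exp (hilbertDist Ω x y) * (1 - s) := by
  rcases eq_or_ne x y with rfl | hne
  · exact ⟨0, 0, x, x, subset_closure hx, subset_closure hx, le_refl _, one_pos,
      le_refl _, by simp, by simp, by simp [hilbertDist_self]⟩
  · have hv : y - x ≠ 0 := sub_ne_zero.mpr (Ne.symm hne)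
    have hv' : x - y ≠ 0 := sub_ne_zero.mpr hne
    set Tb := exitT Ω y (y - x) with hTbdef
    set Ta := exitT Ω x (x - y) with hTadef
    have hTbpos : 0 < Tb := exitT_pos hopen hbdd hy hv
    have hTapos : 0 < Ta := exitT_pos hopen hbdd hx hv'
    refine ⟨1 / (1 + Tb), 1 / Ta, y + Tb • (y - x), x + Ta • (x - y),
      exit_mem_closure hbdd hy hv, exit_mem_closure hbdd hx hv', by positivity, ?_, by positivity,
      ?_, ?_, ?_⟩
    · rw [div_lt_one (by linarith)]; linarith
    · have : y + Tb • (y - x) - x = (1 + Tb) • (y - x) := by module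
      rw [this, smul_smul, one_div, inv_mul_cancel₀ (by linarith), one_smul]
    · have : x - (x + Ta • (x - y)) = Ta • (y - x) := by module
      rw [this, smul_smul, one_div, inv_mul_cancel₀ (ne_of_gt hTapos), one_smul]
    · rw [hilbertDist_formula hopen hbdd hx hy hne,
        Real.exp_log (by linarith [hilbertDist_pos_arg hopen hbdd hx hy hne])]
      rw [← hTbdef, ← hTadef]
      field_simp
      ring

/-- Converse: any representation bounds the Hilbert distance. -/
lemma conv_bound (hopen : IsOpen Ω) (hconv : Convex ℝ Ω) (hbdd : Bornology.IsBounded Ω)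
    {x y : Ed d} (hx : x ∈ Ω) (hy : y ∈ Ω) {s u : ℝ} {k k' : Ed d}
    (hk : k ∈ closure Ω) (hk' : k' ∈ closure Ω)
    (hs0 : 0 ≤ s) (hs1 : s < 1) (hu0 : 0 ≤ u)
    (hrep1 : y - x = s • (k - x)) (hrep2 : y - x = u • (x - k')) :
    hilbertDist Ω x y ≤ Real.log ((1 + u) / (1 - s)) := by
  rcases eq_or_ne x y with rfl | hne
  · rw [hilbertDist_self]
    apply Real.log_nonneg
    rw [le_div_iff₀ (by linarith)]
    linarith
  · have hv : y - x ≠ 0 := sub_ne_zero.mpr (Ne.symm hne)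
    have hv' : x - y ≠ 0 := sub_ne_zero.mpr hne
    have hs : 0 < s := by
      rcases hs0.lt_or_eq with h | h
      · exact h
      · exfalso; apply hv; rw [hrep1, ← h, zero_smul]
    have hu : 0 < u := by
      rcases hu0.lt_or_eq with h | h
      · exact h
      · exfalso; apply hv; rw [hrep2, ← h, zero_smul]
    set Tb := exitT Ω y (y - x) with hTbdef
    set Ta := exitT Ω x (x - y) with hTadef
    have hTbpos : 0 < Tb := exitT_pos hopen hbdd hy hv
    have hTapos : 0 < Ta := exitT_pos hopen hbdd hx hv'
    -- k = y + ((1-s)/s) • (y - x)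
    have hkeq : k = y + ((1 - s)/s) • (y - x) := by
      have h2 : k - x = s⁻¹ • (y - x) := by
        rw [hrep1, smul_smul, inv_mul_cancel₀ (ne_of_gt hs), one_smul]
      have h3 : k = x + s⁻¹ • (y - x) := by
        rw [← h2]; module
      have hco : (1 - s)/s = s⁻¹ - 1 := by field_simp
      rw [h3, hco, sub_smul, one_smul]
      module
    have hTbge : (1 - s)/s ≤ Tb := by
      apply exit_max hopen hconv hbdd hy hv (div_nonneg (by linarith) hs.le)
      rw [← hkeq]; exact hk
    have hk'eq : k' = x + u⁻¹ • (x - y) := by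
      have h2 : x - k' = u⁻¹ • (y - x) := by
        rw [hrep2, smul_smul, inv_mul_cancel₀ (ne_of_gt hu), one_smul]
      have h3 : k' = x - u⁻¹ • (y - x) := by rw [← h2]; module
      rw [h3]
      module
    have hTage : u⁻¹ ≤ Ta := by
      apply exit_max hopen hconv hbdd hx hv' (by positivity)
      rw [← hk'eq]; exact hk'
    rw [hilbertDist_formula hopen hbdd hx hy hne, ← hTbdef, ← hTadef]
    apply Real.log_le_log (by positivity)
    rw [div_le_div_iff₀ (by positivity) (by linarith)]
    have e1 : (1 + Tb) * (1 - s) ≤ Tb := by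
      have : (1 - s)/s * s ≤ Tb * s := by
        apply mul_le_mul_of_nonneg_right hTbge (le_of_lt hs)
      rw [div_mul_cancel₀ _ (ne_of_gt hs)] at this
      nlinarith
    have e2 : (1 + Ta) ≤ Ta * (1 + u) := by
      have : u⁻¹ * u ≤ Ta * u := mul_le_mul_of_nonneg_right hTage (le_of_lt hu)
      rw [inv_mul_cancel₀ (ne_of_gt hu)] at this
      nlinarith
    have e3 := mul_le_mul e1 e2 (by linarith) (le_of_lt hTbpos)
    nlinarith [e3]

/-- Combine two "cone" representations into one. -/
lemma combo (hconv : Convex ℝ Ω) {x w : Ed d} (hx : x ∈ Ω) {c₁ c₂ : ℝ} {k₁ k₂ : Ed d}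
    (hk₁ : k₁ ∈ closure Ω) (hk₂ : k₂ ∈ closure Ω) (h1 : 0 ≤ c₁) (h2 : 0 ≤ c₂)
    (hw : w = c₁ • (k₁ - x) + c₂ • (k₂ - x)) :
    ∃ k ∈ closure Ω, w = (c₁ + c₂) • (k - x) := by
  rcases eq_or_lt_of_le (by positivity : (0:ℝ) ≤ c₁ + c₂) with h | hC
  · have hc₁ : c₁ = 0 := by linarith
    have hc₂ : c₂ = 0 := by linarith
    exact ⟨x, subset_closure hx, by rw [hw, hc₁, hc₂]; module⟩
  · refine ⟨(c₁ / (c₁ + c₂)) • k₁ + (c₂ / (c₁ + c₂)) • k₂, ?_, ?_⟩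
    · exact hconv.closure hk₁ hk₂ (by positivity) (by positivity)
        (by field_simp)
    · have key : (c₁ + c₂) • ((c₁ / (c₁ + c₂)) • k₁ + (c₂ / (c₁ + c₂)) • k₂)
          = c₁ • k₁ + c₂ • k₂ := by
        rw [smul_add, smul_smul, smul_smul, mul_div_cancel₀ _ (ne_of_gt hC),
          mul_div_cancel₀ _ (ne_of_gt hC)]
      rw [hw]
      conv_rhs => rw [smul_sub, key]
      module

lemma combo' (hconv : Convex ℝ Ω) {x w : Ed d} (hx : x ∈ Ω) {c₁ c₂ : ℝ} {k₁ k₂ : Ed d}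
    (hk₁ : k₁ ∈ closure Ω) (hk₂ : k₂ ∈ closure Ω) (h1 : 0 ≤ c₁) (h2 : 0 ≤ c₂)
    (hw : w = c₁ • (x - k₁) + c₂ • (x - k₂)) :
    ∃ k ∈ closure Ω, w = (c₁ + c₂) • (x - k) := by
  obtain ⟨k, hk, hkeq⟩ := combo hconv hx hk₁ hk₂ h1 h2
    (show -w = c₁ • (k₁ - x) + c₂ • (k₂ - x) by rw [hw]; module)
  refine ⟨k, hk, ?_⟩
  have : w = -((c₁ + c₂) • (k - x)) := by rw [← hkeq]; module
  rw [this]; module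

lemma hilbert_triangle (hopen : IsOpen Ω) (hconv : Convex ℝ Ω)
    (hbdd : Bornology.IsBounded Ω) {x y z : Ed d} (hx : x ∈ Ω) (hy : y ∈ Ω) (hz : z ∈ Ω) :
    hilbertDist Ω x z ≤ hilbertDist Ω x y + hilbertDist Ω y z := by
  obtain ⟨s₁, u₁, k₁, k₁', hk₁, hk₁', hs₁0, hs₁1, hu₁0, hr₁, hr₁', he₁⟩ :=
    rep hopen hbdd hx hy
  obtain ⟨s₂, u₂, k₂, k₂', hk₂, hk₂', hs₂0, hs₂1, hu₂0, hr₂, hr₂', he₂⟩ :=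
    rep hopen hbdd hy hz
  -- forward representation of z - x
  have hfwd : z - x = s₂ • (k₂ - x) + (s₁ * (1 - s₂)) • (k₁ - x) := by
    have : z - x = (z - y) + (y - x) := by module
    rw [this, hr₂, hr₁]
    have hky : k₂ - y = (k₂ - x) - s₁ • (k₁ - x) := by
      have : k₂ - y = (k₂ - x) - (y - x) := by module
      rw [this, hr₁]
    rw [hky]
    module
  obtain ⟨k, hk, hkeq⟩ := combo hconv hx hk₂ hk₁ hs₂0
    (mul_nonneg hs₁0 (by linarith)) hfwd
  -- backward representation of z - x
  have hbwd : z - x = u₂ • (x - k₂') + (u₁ + u₁ * u₂) • (x - k₁') := by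
    have h0 : z - x = (z - y) + (y - x) := by module
    rw [h0, hr₂', hr₁']
    have hky : y - k₂' = (x - k₂') + u₁ • (x - k₁') := by
      have : y - k₂' = (x - k₂') + (y - x) := by module
      rw [this, hr₁']
    rw [hky]
    module
  obtain ⟨k', hk', hk'eq⟩ := combo' hconv hx hk₂' hk₁' hu₂0
    (add_nonneg hu₁0 (mul_nonneg hu₁0 hu₂0)) hbwd
  have hS1 : s₂ + s₁ * (1 - s₂) < 1 := by
    have := mul_lt_mul_of_pos_right hs₁1 (show (0:ℝ) < 1 - s₂ by linarith)
    linarith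
  have hS0 : 0 ≤ s₂ + s₁ * (1 - s₂) :=
    add_nonneg hs₂0 (mul_nonneg hs₁0 (by linarith))
  have hU0 : 0 ≤ u₂ + (u₁ + u₁ * u₂) :=
    add_nonneg hu₂0 (add_nonneg hu₁0 (mul_nonneg hu₁0 hu₂0))
  have hcb := conv_bound hopen hconv hbdd hx hz hk hk' hS0 hS1 hU0 hkeq hk'eq
  refine le_trans hcb ?_
  have hexp : (1 + (u₂ + (u₁ + u₁ * u₂))) / (1 - (s₂ + s₁ * (1 - s₂)))
      ≤ Real.exp (hilbertDist Ω x y + hilbertDist Ω y z) := by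
    rw [Real.exp_add]
    rw [div_le_iff₀ (by linarith : (0:ℝ) < 1 - (s₂ + s₁ * (1 - s₂)))]
    have key : 1 + (u₂ + (u₁ + u₁ * u₂)) = (1 + u₁) * (1 + u₂) := by ring
    have key2 : 1 - (s₂ + s₁ * (1 - s₂)) = (1 - s₁) * (1 - s₂) := by ring
    rw [key, key2, he₁, he₂]
    exact le_of_eq (by ring)
  calc Real.log ((1 + (u₂ + (u₁ + u₁ * u₂))) / (1 - (s₂ + s₁ * (1 - s₂))))
      ≤ Real.log (Real.exp (hilbertDist Ω x y + hilbertDist Ω y z)) := by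
        apply Real.log_le_log (div_pos (by linarith) (by linarith)) hexp
    _ = _ := Real.log_exp _

lemma hilbert_quasiconvex (hopen : IsOpen Ω) (hconv : Convex ℝ Ω)
    (hbdd : Bornology.IsBounded Ω) {x y z w : Ed d} (hx : x ∈ Ω) (hy : y ∈ Ω) (hz : z ∈ Ω)
    {lam : ℝ} (hl0 : 0 ≤ lam) (hl1 : lam ≤ 1) (hw : w = (1 - lam) • y + lam • z) :
    hilbertDist Ω x w ≤ max (hilbertDist Ω x y) (hilbertDist Ω x z) := by
  obtain ⟨s₁, u₁, k₁, k₁', hk₁, hk₁', hs₁0, hs₁1, hu₁0, hr₁, hr₁', he₁⟩ :=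
    rep hopen hbdd hx hy
  obtain ⟨s₂, u₂, k₂, k₂', hk₂, hk₂', hs₂0, hs₂1, hu₂0, hr₂, hr₂', he₂⟩ :=
    rep hopen hbdd hx hz
  have hfwd : w - x = ((1 - lam) * s₁) • (k₁ - x) + (lam * s₂) • (k₂ - x) := by
    have h0 : w - x = (1 - lam) • (y - x) + lam • (z - x) := by rw [hw]; module
    rw [h0, hr₁, hr₂, smul_smul, smul_smul]
  obtain ⟨k, hk, hkeq⟩ := combo hconv hx hk₁ hk₂ (mul_nonneg (by linarith) hs₁0)
    (mul_nonneg hl0 hs₂0) hfwd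
  have hbwd : w - x = ((1 - lam) * u₁) • (x - k₁') + (lam * u₂) • (x - k₂') := by
    have h0 : w - x = (1 - lam) • (y - x) + lam • (z - x) := by rw [hw]; module
    rw [h0, hr₁', hr₂', smul_smul, smul_smul]
  obtain ⟨k', hk', hk'eq⟩ := combo' hconv hx hk₁' hk₂' (mul_nonneg (by linarith) hu₁0)
    (mul_nonneg hl0 hu₂0) hbwd
  have hS1 : (1 - lam) * s₁ + lam * s₂ < 1 := by
    rcases lt_or_eq_of_le hl1 with h | h
    · have h1 := mul_lt_mul_of_pos_left hs₁1 (show (0:ℝ) < 1 - lam by linarith)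
      have h2 := mul_le_mul_of_nonneg_left hs₂1.le hl0
      linarith
    · subst h; linarith
  have hS0 : 0 ≤ (1 - lam) * s₁ + lam * s₂ :=
    add_nonneg (mul_nonneg (by linarith) hs₁0) (mul_nonneg hl0 hs₂0)
  have hU0 : 0 ≤ (1 - lam) * u₁ + lam * u₂ :=
    add_nonneg (mul_nonneg (by linarith) hu₁0) (mul_nonneg hl0 hu₂0)
  have hcb := conv_bound hopen hconv hbdd hx
    (by rw [hw]; exact hconv hy hz (by linarith) hl0 (by ring) : w ∈ Ω)
    hk hk' hS0 hS1 hU0 hkeq hk'eq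
  refine le_trans hcb ?_
  set M := max (hilbertDist Ω x y) (hilbertDist Ω x z) with hM
  have hd₁ : Real.exp (hilbertDist Ω x y) ≤ Real.exp M :=
    Real.exp_le_exp.mpr (le_max_left _ _)
  have hd₂ : Real.exp (hilbertDist Ω x z) ≤ Real.exp M :=
    Real.exp_le_exp.mpr (le_max_right _ _)
  have hexp : (1 + ((1 - lam) * u₁ + lam * u₂)) / (1 - ((1 - lam) * s₁ + lam * s₂))
      ≤ Real.exp M := by
    rw [div_le_iff₀ (by linarith : (0:ℝ) < 1 - ((1 - lam) * s₁ + lam * s₂))]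
    have key : 1 + ((1 - lam) * u₁ + lam * u₂)
        = (1 - lam) * (1 + u₁) + lam * (1 + u₂) := by ring
    rw [key, he₁, he₂]
    have b₁ : (1 - lam) * (Real.exp (hilbertDist Ω x y) * (1 - s₁))
        ≤ (1 - lam) * (Real.exp M * (1 - s₁)) := by
      apply mul_le_mul_of_nonneg_left _ (by linarith)
      apply mul_le_mul_of_nonneg_right hd₁ (by linarith)
    have b₂ : lam * (Real.exp (hilbertDist Ω x z) * (1 - s₂))
        ≤ lam * (Real.exp M * (1 - s₂)) := by
      apply mul_le_mul_of_nonneg_left _ hl0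
      apply mul_le_mul_of_nonneg_right hd₂ (by linarith)
    have hr : Real.exp M * (1 - ((1 - lam) * s₁ + lam * s₂))
        = (1 - lam) * (Real.exp M * (1 - s₁)) + lam * (Real.exp M * (1 - s₂)) := by ring
    rw [hr]
    linarith [b₁, b₂]
  calc Real.log ((1 + ((1 - lam) * u₁ + lam * u₂)) / (1 - ((1 - lam) * s₁ + lam * s₂)))
      ≤ Real.log (Real.exp M) :=
        Real.log_le_log (div_pos (by linarith) (by linarith)) hexp
    _ = M := Real.log_exp _

lemma exit_bddBelow (hbdd : Bornology.IsBounded Ω) {p v : Ed d} (hv : v ≠ 0) :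
    BddBelow {t : ℝ | p + t • v ∈ Ω} := by
  obtain ⟨R, hR⟩ := hbdd.exists_norm_le
  refine ⟨-((R + ‖p‖) / ‖v‖), fun t ht => ?_⟩
  have h1 : ‖p + t • v‖ ≤ R := hR _ ht
  have h2 : ‖t • v‖ ≤ ‖p + t • v‖ + ‖p‖ := by
    have h2' := norm_sub_le (p + t • v) p
    have heq : (p + t • v) - p = t • v := by module
    rwa [heq] at h2'
  have h3 : |t| * ‖v‖ ≤ R + ‖p‖ := by
    rw [norm_smul, Real.norm_eq_abs] at h2; linarith
  have hv' : 0 < ‖v‖ := norm_pos_iff.mpr hv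
  have : |t| ≤ (R + ‖p‖) / ‖v‖ := by rw [le_div_iff₀ hv']; exact h3
  have := neg_abs_le t
  linarith

lemma lt_sSup_line (hopen : IsOpen Ω) (hbdd : Bornology.IsBounded Ω) {p v : Ed d}
    (hv : v ≠ 0) {μ : ℝ} (hμ : p + μ • v ∈ Ω) :
    μ < sSup {t : ℝ | p + t • v ∈ Ω} := by
  obtain ⟨ε, hε, hball⟩ := Metric.isOpen_iff.mp hopen _ hμ
  have hv' : 0 < ‖v‖ := norm_pos_iff.mpr hv
  set δ := ε / (2 * ‖v‖) with hδ
  have hδpos : 0 < δ := by positivity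
  have hmem : p + (μ + δ) • v ∈ Ω := by
    apply hball
    rw [Metric.mem_ball, dist_eq_norm]
    have heq : p + (μ + δ) • v - (p + μ • v) = δ • v := by module
    rw [heq, norm_smul, Real.norm_eq_abs, abs_of_pos hδpos]
    have : δ * ‖v‖ = ε / 2 := by rw [hδ]; field_simp
    rw [this]; linarith
  calc μ < μ + δ := by linarith
    _ ≤ sSup {t : ℝ | p + t • v ∈ Ω} := le_csSup (exit_bddAbove hbdd hv) hmem

lemma sInf_lt_line (hopen : IsOpen Ω) (hbdd : Bornology.IsBounded Ω) {p v : Ed d}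
    (hv : v ≠ 0) {μ : ℝ} (hμ : p + μ • v ∈ Ω) :
    sInf {t : ℝ | p + t • v ∈ Ω} < μ := by
  obtain ⟨ε, hε, hball⟩ := Metric.isOpen_iff.mp hopen _ hμ
  have hv' : 0 < ‖v‖ := norm_pos_iff.mpr hv
  set δ := ε / (2 * ‖v‖) with hδ
  have hδpos : 0 < δ := by positivity
  have hmem : p + (μ - δ) • v ∈ Ω := by
    apply hball
    rw [Metric.mem_ball, dist_eq_norm]
    have heq : p + (μ - δ) • v - (p + μ • v) = (-δ) • v := by module
    rw [heq, norm_smul, Real.norm_eq_abs, abs_of_neg (by linarith)]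
    have : -(-δ) * ‖v‖ = ε / 2 := by rw [hδ]; field_simp
    rw [this]; linarith
  calc sInf {t : ℝ | p + t • v ∈ Ω} ≤ μ - δ := csInf_le (exit_bddBelow hbdd hv) hmem
    _ < μ := by linarith

/-- Exit time of the point `q + μ v` in direction `μ v`, in terms of the line data. -/
lemma exitT_fwd_line (hbdd : Bornology.IsBounded Ω) {q v : Ed d} (hq : q ∈ Ω)
    (hv : v ≠ 0) {μ : ℝ} (hμpos : 0 < μ) (hμ : q + μ • v ∈ Ω) :
    exitT Ω (q + μ • v) (μ • v) = (sSup {c : ℝ | q + c • v ∈ Ω} - μ) / μ := by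
  set S := {c : ℝ | q + c • v ∈ Ω} with hS
  set β := sSup S with hβ
  have hne : S.Nonempty := ⟨μ, hμ⟩
  have hbb : BddAbove S := exit_bddAbove hbdd hv
  apply IsLUB.csSup_eq _ ⟨0, by simpa using hμ⟩
  constructor
  · intro t ht
    have hmem : μ * (1 + t) ∈ S := by
      have heq : q + (μ * (1 + t)) • v = q + μ • v + t • (μ • v) := by
        rw [smul_smul]; module
      show q + (μ * (1 + t)) • v ∈ Ω
      rw [heq]; exact ht
    have := le_csSup hbb hmem
    rw [le_div_iff₀ hμpos]
    nlinarith
  · intro b hb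
    by_contra hcon
    push_neg at hcon
    have hβb : μ * (1 + b) < β := by
      rw [lt_div_iff₀ hμpos] at hcon
      linarith
    obtain ⟨m, hm, hmb⟩ := exists_lt_of_lt_csSup hne hβb
    have hmem : (m / μ - 1) ∈ {t : ℝ | (q + μ • v) + t • (μ • v) ∈ Ω} := by
      show (q + μ • v) + (m / μ - 1) • (μ • v) ∈ Ω
      have heq : (q + μ • v) + (m / μ - 1) • (μ • v) = q + m • v := by
        rw [smul_smul]
        have : (m / μ - 1) * μ = m - μ := by field_simp
        rw [this]; module
      rw [heq]; exact hm
    have := hb hmem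
    have : m ≤ μ * (1 + b) := by
      rw [div_sub' (ne_of_gt hμpos)] at this
      rw [div_le_iff₀ hμpos] at this
      nlinarith
    linarith

/-- Exit time of `q` in direction `-(μ v)`, in terms of the line data. -/
lemma exitT_bwd_line (hbdd : Bornology.IsBounded Ω) {q v : Ed d} (hq : q ∈ Ω)
    (hv : v ≠ 0) {μ : ℝ} (hμpos : 0 < μ) :
    exitT Ω q (-(μ • v)) = -(sInf {c : ℝ | q + c • v ∈ Ω}) / μ := by
  set S := {c : ℝ | q + c • v ∈ Ω} with hS
  set α := sInf S with hα
  have hne : S.Nonempty := ⟨0, show q + (0:ℝ) • v ∈ Ω by simpa using hq⟩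
  have hbb : BddBelow S := exit_bddBelow hbdd hv
  show sSup {t : ℝ | q + t • (-(μ • v)) ∈ Ω} = -(sInf S) / μ
  refine IsLUB.csSup_eq ?_ ⟨0, show q + (0:ℝ) • (-(μ • v)) ∈ Ω by simpa using hq⟩
  constructor
  · intro t ht
    have hmem : -(t * μ) ∈ S := by
      show q + (-(t * μ)) • v ∈ Ω
      have heq : q + (-(t * μ)) • v = q + t • (-(μ • v)) := by
        rw [smul_neg, smul_smul]; module
      rw [heq]; exact ht
    have := csInf_le hbb hmem
    rw [le_div_iff₀ hμpos]
    nlinarith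
  · intro b hb
    by_contra hcon
    push_neg at hcon
    have hαb : α < -(b * μ) := by
      rw [lt_div_iff₀ hμpos] at hcon
      linarith
    obtain ⟨m, hm, hmb⟩ := exists_lt_of_csInf_lt hne hαb
    have hmem : (-(m / μ)) ∈ {t : ℝ | q + t • (-(μ • v)) ∈ Ω} := by
      show q + (-(m / μ)) • (-(μ • v)) ∈ Ω
      have heq : q + (-(m / μ)) • (-(μ • v)) = q + m • v := by
        rw [smul_neg, smul_smul]
        have : -(m / μ) * μ = -m := by field_simp
        rw [this]; module
      rw [heq]; exact hm
    have h1 := hb hmem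
    have hmul := mul_le_mul_of_nonneg_right h1 hμpos.le
    rw [show -(m / μ) * μ = -m from by field_simp] at hmul
    linarith

/-- Distance formula along a line through `q`. -/
lemma dist_on_line (hopen : IsOpen Ω) (hbdd : Bornology.IsBounded Ω)
    {q v : Ed d} (hq : q ∈ Ω) (hv : v ≠ 0) {μ : ℝ} (hμpos : 0 < μ)
    (hμ : q + μ • v ∈ Ω) :
    hilbertDist Ω q (q + μ • v) =
      Real.log ((sSup {c : ℝ | q + c • v ∈ Ω}) * (μ - sInf {c : ℝ | q + c • v ∈ Ω}) /
        ((sSup {c : ℝ | q + c • v ∈ Ω} - μ) * (-(sInf {c : ℝ | q + c • v ∈ Ω})))) := by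
  set S := {c : ℝ | q + c • v ∈ Ω} with hS
  set β := sSup S with hβ
  set α := sInf S with hα
  have h0S : (0:ℝ) ∈ S := show q + (0:ℝ) • v ∈ Ω by simpa using hq
  have hβμ : μ < β := lt_sSup_line hopen hbdd hv hμ
  have hα0 : α < 0 := sInf_lt_line hopen hbdd hv (by simpa using hq)
  have hne : q ≠ q + μ • v := by
    intro h
    have : μ • v = 0 := by
      have := congrArg (fun w => w - q) h
      simpa using this.symm
    rcases smul_eq_zero.mp this with h' | h'
    · exact (ne_of_gt hμpos) h'
    · exact hv h'
  rw [hilbertDist_formula hopen hbdd hq hμ hne]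
  have e1 : (q + μ • v) - q = μ • v := by module
  have e2 : q - (q + μ • v) = -(μ • v) := by module
  rw [e1, e2, exitT_fwd_line hbdd hq hv hμpos hμ, exitT_bwd_line hbdd hq hv hμpos]
  congr 1
  have hμne : μ ≠ 0 := ne_of_gt hμpos
  field_simp
  ring

/-- Strict monotonicity of the Hilbert distance along a ray from `q`. -/
lemma dist_lt_on_ray (hopen : IsOpen Ω) (hbdd : Bornology.IsBounded Ω)
    {q v : Ed d} (hq : q ∈ Ω) (hv : v ≠ 0) {μ₁ μ₂ : ℝ} (h0 : 0 < μ₁) (h12 : μ₁ < μ₂)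
    (h1 : q + μ₁ • v ∈ Ω) (h2 : q + μ₂ • v ∈ Ω) :
    hilbertDist Ω q (q + μ₁ • v) < hilbertDist Ω q (q + μ₂ • v) := by
  set S := {c : ℝ | q + c • v ∈ Ω} with hS
  set β := sSup S with hβ
  set α := sInf S with hα
  have hβ2 : μ₂ < β := lt_sSup_line hopen hbdd hv h2
  have hα0 : α < 0 := sInf_lt_line hopen hbdd hv (by simpa using hq)
  rw [dist_on_line hopen hbdd hq hv h0 h1,
    dist_on_line hopen hbdd hq hv (lt_trans h0 h12) h2]
  apply Real.log_lt_log
  · apply div_pos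
    · apply mul_pos (by linarith) (by linarith)
    · apply mul_pos (by linarith) (by linarith)
  · rw [div_lt_div_iff₀ (mul_pos (by linarith : (0:ℝ) < β - μ₁) (by linarith : (0:ℝ) < -α))
      (mul_pos (by linarith : (0:ℝ) < β - μ₂) (by linarith : (0:ℝ) < -α))]
    have hkey : (μ₁ - α) * (β - μ₂) < (μ₂ - α) * (β - μ₁) := by nlinarith
    nlinarith [hkey, mul_pos (by linarith : (0:ℝ) < β) (by linarith : (0:ℝ) < -α)]

end HilbertAux

open HilbertAux

/-- The set of closest points on a bi-infinite projective line `σ` (a unit-speed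
geodesic line lying on an affine line in `Ω`) to a point `x ∈ Ω` is either a single
point or a closed subsegment `σ '' [T₋, T₊]` with `T₋ < T₊`; in particular it is convex. -/
theorem closest_point_set_convex {d : ℕ} (Ω : Set (Ed d)) (hΩ : IsProperlyConvex Ω)
    (σ : ℝ → Ed d) (hσΩ : ∀ t, σ t ∈ Ω)
    (hline : Collinear ℝ (Set.range σ))
    (hunit : ∀ s t : ℝ, hilbertDist Ω (σ s) (σ t) = |s - t|)
    (x : Ed d) (hx : x ∈ Ω) :
    (∃ y : Ed d, {y : Ed d | y ∈ Set.range σ ∧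
        hilbertDist Ω x y = ⨅ t : ℝ, hilbertDist Ω x (σ t)} = {y}) ∨
    (∃ T₁ T₂ : ℝ, T₁ < T₂ ∧ {y : Ed d | y ∈ Set.range σ ∧
        hilbertDist Ω x y = ⨅ t : ℝ, hilbertDist Ω x (σ t)} = σ '' Set.Icc T₁ T₂) := by
  obtain ⟨hopen, hconv, hbdd, -⟩ := hΩ
  set f : ℝ → ℝ := fun t => hilbertDist Ω x (σ t) with hf
  set m : ℝ := ⨅ t : ℝ, f t with hm
  have hf0 : ∀ t, 0 ≤ f t := fun t => hilbertDist_nonneg hopen hbdd hx (hσΩ t)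
  have hBdd : BddBelow (Set.range f) := ⟨0, by rintro _ ⟨t, rfl⟩; exact hf0 t⟩
  have hm_le : ∀ t, m ≤ f t := fun t => ciInf_le hBdd t
  -- Lipschitz continuity of f
  have hlip : ∀ s t : ℝ, f s ≤ f t + |t - s| := by
    intro s t
    have htr := hilbert_triangle hopen hconv hbdd hx (hσΩ t) (hσΩ s)
    rw [hunit t s] at htr
    exact htr
  have hcont : Continuous f := by
    have : LipschitzWith 1 f := by
      apply LipschitzWith.of_dist_le_mul
      intro s t
      rw [Real.dist_eq, Real.dist_eq, NNReal.coe_one, one_mul]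
      rw [abs_sub_le_iff]
      constructor
      · have := hlip s t; rw [abs_sub_comm] at this; linarith
      · have := hlip t s; linarith
    exact this.continuous
  -- coercivity
  have hco : ∀ t : ℝ, |t| - f 0 ≤ f t := by
    intro t
    have htr := hilbert_triangle hopen hconv hbdd (hσΩ 0) hx (hσΩ t)
    have h1 : hilbertDist Ω (σ 0) (σ t) = |t| := by
      have := hunit 0 t; rwa [zero_sub, abs_neg] at this
    have h2 : hilbertDist Ω (σ 0) x = f 0 :=
      (hilbertDist_symm hopen hbdd hx (hσΩ 0)).symm
    rw [h1, h2] at htr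
    linarith
  -- existence of a global minimizer
  set M : ℝ := f 0 + f 0 + 1 with hM
  have hMpos : 0 < M := by have := hf0 0; simp only [hM]; linarith
  obtain ⟨t₀, ht₀mem, ht₀min⟩ := (isCompact_Icc (a := -M) (b := M)).exists_isMinOn
    ⟨0, by constructor <;> [linarith; linarith]⟩ hcont.continuousOn
  have ht₀0 : f t₀ ≤ f 0 :=
    isMinOn_iff.mp ht₀min 0 ⟨by linarith, by linarith⟩
  have hglob : ∀ t, f t₀ ≤ f t := by
    intro t
    by_cases h : t ∈ Set.Icc (-M) M
    · exact isMinOn_iff.mp ht₀min t h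
    · have habs : M < |t| := by
        simp only [Set.mem_Icc, not_and_or, not_le] at h
        rcases h with h | h
        · rw [abs_of_neg (by linarith)]; linarith
        · rw [abs_of_pos (by linarith)]; linarith
      have := hco t
      linarith
  have hm_eq : m = f t₀ := le_antisymm (hm_le t₀) (le_ciInf hglob)
  -- the set of minimizing parameters
  set A : Set ℝ := {t : ℝ | f t = m} with hA
  have ht₀A : t₀ ∈ A := by
    simp only [hA, Set.mem_setOf_eq, hm_eq]
  have hA_ne : A.Nonempty := ⟨t₀, ht₀A⟩
  have hA_bdd : ∀ t ∈ A, |t| ≤ M := by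
    intro t ht
    by_contra habs
    push_neg at habs
    have h1 := hco t
    have h2 : f t = m := ht
    have h3 : m ≤ f 0 := hm_eq ▸ ht₀0
    simp only [hM] at habs
    linarith
  have hA_above : BddAbove A := ⟨M, fun t ht => le_trans (le_abs_self t) (hA_bdd t ht)⟩
  have hA_below : BddBelow A := ⟨-M, fun t ht => by
    have := hA_bdd t ht; have := neg_abs_le t; linarith⟩
  have hA_closed : IsClosed A := isClosed_eq hcont continuous_const
  -- convexity of A (key step, using quasiconvexity of the distance)
  have hA_conv : ∀ t₁ ∈ A, ∀ t₂ ∈ A, ∀ t, t₁ ≤ t → t ≤ t₂ → t ∈ A := by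
    intro t₁ ht₁ t₂ ht₂ t htl htr
    rcases eq_or_lt_of_le htl with rfl | htl'
    · exact ht₁
    rcases eq_or_lt_of_le htr with rfl | htr'
    · exact ht₂
    have ht₁₂ : t₁ < t₂ := lt_trans htl' htr'
    -- collinearity: express σ t on the segment
    obtain ⟨p, v, hpv⟩ := (collinear_iff_exists_forall_eq_smul_vadd _).mp hline
    obtain ⟨c₁, hc₁⟩ := hpv (σ t₁) ⟨t₁, rfl⟩
    obtain ⟨c₂, hc₂⟩ := hpv (σ t₂) ⟨t₂, rfl⟩
    obtain ⟨c, hc⟩ := hpv (σ t) ⟨t, rfl⟩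
    have hne12 : σ t₁ ≠ σ t₂ := by
      intro h
      have := hunit t₁ t₂
      rw [h, hilbertDist_self] at this
      have : |t₁ - t₂| = 0 := this.symm
      rw [abs_eq_zero] at this
      linarith
    have hc12 : c₁ ≠ c₂ := by
      intro h; apply hne12; rw [hc₁, hc₂, h]
    have hw : σ t₂ - σ t₁ = (c₂ - c₁) • v := by
      rw [hc₁, hc₂]; simp only [vadd_eq_add]; module
    have hwv : σ t₂ - σ t₁ ≠ 0 := sub_ne_zero.mpr (Ne.symm hne12)
    set lam : ℝ := (c - c₁) / (c₂ - c₁) with hlam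
    have hc21 : c₂ - c₁ ≠ 0 := sub_ne_zero.mpr (Ne.symm hc12)
    have hσt : σ t = σ t₁ + lam • (σ t₂ - σ t₁) := by
      rw [hw, hc, hc₁, smul_smul, hlam, div_mul_cancel₀ _ hc21]
      simp only [vadd_eq_add]
      module
    -- lam ∈ [0,1]
    have hd12 : hilbertDist Ω (σ t₁) (σ t₂) = t₂ - t₁ := by
      rw [hunit t₁ t₂, abs_sub_comm, abs_of_pos (by linarith)]
    have hd1t : hilbertDist Ω (σ t₁) (σ t) = t - t₁ := by
      rw [hunit t₁ t, abs_sub_comm, abs_of_pos (by linarith)]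
    have hd2t : hilbertDist Ω (σ t₂) (σ t) = t₂ - t := by
      rw [hunit t₂ t, abs_of_pos (by linarith)]
    have hlam1 : lam ≤ 1 := by
      by_contra hcon
      push_neg at hcon
      have key := dist_lt_on_ray hopen hbdd (hσΩ t₁) hwv one_pos hcon
        (by rw [one_smul]; have : σ t₁ + (σ t₂ - σ t₁) = σ t₂ := by module
            rw [this]; exact hσΩ t₂)
        (by rw [← hσt]; exact hσΩ t)
      have e1 : σ t₁ + (1:ℝ) • (σ t₂ - σ t₁) = σ t₂ := by module
      have e2 : σ t₁ + lam • (σ t₂ - σ t₁) = σ t := hσt.symm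
      rw [e1, e2, hd12, hd1t] at key
      linarith
    have hlam0 : 0 ≤ lam := by
      by_contra hcon
      push_neg at hcon
      have hwv' : σ t₁ - σ t₂ ≠ 0 := sub_ne_zero.mpr hne12
      have hgt : (1:ℝ) < 1 - lam := by linarith
      have he2 : σ t₂ + (1 - lam) • (σ t₁ - σ t₂) = σ t := by
        rw [hσt]; module
      have key := dist_lt_on_ray hopen hbdd (hσΩ t₂) hwv' one_pos hgt
        (by rw [one_smul]; have : σ t₂ + (σ t₁ - σ t₂) = σ t₁ := by module
            rw [this]; exact hσΩ t₁)
        (by rw [he2]; exact hσΩ t)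
      have e1 : σ t₂ + (1:ℝ) • (σ t₁ - σ t₂) = σ t₁ := by module
      rw [e1, he2] at key
      have hd21 : hilbertDist Ω (σ t₂) (σ t₁) = t₂ - t₁ := by
        rw [hunit t₂ t₁, abs_of_pos (by linarith)]
      rw [hd21, hd2t] at key
      linarith
    -- quasiconvexity gives f t ≤ m
    have hseg : σ t = (1 - lam) • (σ t₁) + lam • (σ t₂) := by
      rw [hσt]; module
    have hq := hilbert_quasiconvex hopen hconv hbdd hx (hσΩ t₁) (hσΩ t₂)
      hlam0 hlam1 hseg
    have hft₁ : f t₁ = m := ht₁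
    have hft₂ : f t₂ = m := ht₂
    have : f t ≤ m := by
      have : max (hilbertDist Ω x (σ t₁)) (hilbertDist Ω x (σ t₂)) = m := by
        show max (f t₁) (f t₂) = m
        rw [hft₁, hft₂, max_self]
      rw [this] at hq
      exact hq
    exact le_antisymm this (hm_le t)
  -- A is a closed interval
  have hinf_mem : sInf A ∈ A := hA_closed.csInf_mem hA_ne hA_below
  have hsup_mem : sSup A ∈ A := hA_closed.csSup_mem hA_ne hA_above
  have hAIcc : A = Set.Icc (sInf A) (sSup A) := by
    apply Set.Subset.antisymm
    · intro t ht
      exact ⟨csInf_le hA_below ht, le_csSup hA_above ht⟩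
    · intro t ht
      exact hA_conv (sInf A) hinf_mem (sSup A) hsup_mem t ht.1 ht.2
  -- the closest-point set is the image of A
  have hSet : {y : Ed d | y ∈ Set.range σ ∧ hilbertDist Ω x y = m} = σ '' A := by
    ext y
    constructor
    · rintro ⟨⟨t, rfl⟩, hd⟩
      exact ⟨t, hd, rfl⟩
    · rintro ⟨t, ht, rfl⟩
      exact ⟨⟨t, rfl⟩, ht⟩
  set T₁ : ℝ := sInf A with hT₁
  set T₂ : ℝ := sSup A with hT₂
  rcases eq_or_lt_of_le (csInf_le_csSup hA_ne hA_below hA_above) with heq | hlt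
  · left
    refine ⟨σ T₁, ?_⟩
    rw [hSet]
    have hsingle : A = {T₁} := by
      apply Set.Subset.antisymm
      · intro t ht
        have h1 : T₁ ≤ t := csInf_le hA_below ht
        have h2 : t ≤ T₂ := le_csSup hA_above ht
        have h3 : t ≤ T₁ := by rw [hT₁, heq, ← hT₂]; exact h2
        exact le_antisymm h3 h1
      · intro t ht
        rw [Set.mem_singleton_iff] at ht
        rw [ht]; exact hinf_mem
    rw [hsingle, Set.image_singleton]
  · right
    exact ⟨T₁, T₂, hlt, by rw [hSet, hAIcc]⟩
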